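/- Let F be a field of prime characteristic p, C = F[c_1,...,c_{p+1}]/(c_i^2), and A(C) = {[[u,v],[0,0]] : u,v in C}. Set x = [[c_1 + ... + c_{p-1}, c_p],[0,0]] and y = [[c_{p+1}, 0],[0,0]]. Then [x^p, y] = -[[0, (p-1)! * c_1*c_2*...*c_{p+1}],[0,0]] ≠ 0. In particular A(C) does not satisfy the identity [x^p, y] = 0. -/

import Mathlib

open MvPolynomial

section aux
variable {R : Type*} [CommRing R] {ι : Type*} [DecidableEq ι]

lemma sum_mul_prod_eq_zero (s : Finset ι) (a : ι → R) (h : ∀ i ∈ s, a i ^ 2 = 0) :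
    (∑ i ∈ s, a i) * ∏ i ∈ s, a i = 0 := by
  rw [Finset.sum_mul]
  refine Finset.sum_eq_zero fun i hi => ?_
  rw [← Finset.mul_prod_erase s a hi, ← mul_assoc, ← sq, h i hi, zero_mul]

lemma sum_pow_card (s : Finset ι) (a : ι → R) :
    (∀ i ∈ s, a i ^ 2 = 0) → (∑ i ∈ s, a i) ^ s.card = s.card.factorial * ∏ i ∈ s, a i := by
  induction s using Finset.induction_on with
  | empty => simp
  | @insert j s hj ih =>
    intro h
    have hj2 : a j ^ 2 = 0 := h j (Finset.mem_insert_self j s)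
    have hs : ∀ i ∈ s, a i ^ 2 = 0 := fun i hi => h i (Finset.mem_insert_of_mem hi)
    have ihs := ih hs
    rw [Finset.sum_insert hj, Finset.card_insert_of_notMem hj, Finset.prod_insert hj,
      add_pow, Finset.sum_range_succ', Finset.sum_range_succ']
    have h0 : ∀ k, a j ^ (k + 1 + 1) = 0 := fun k => by
      have : a j ^ (k + 1 + 1) = a j ^ k * a j ^ 2 := by ring
      rw [this, hj2, mul_zero]
    simp only [h0, zero_mul, Finset.sum_const_zero, zero_add]
    have hz := sum_mul_prod_eq_zero s a hs
    have hS : (∑ i ∈ s, a i) ^ (s.card + 1 - 0) = 0 := by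
      rw [Nat.sub_zero, pow_succ, ihs]
      calc (↑s.card.factorial * ∏ i ∈ s, a i) * ∑ i ∈ s, a i
          = ↑s.card.factorial * ((∑ i ∈ s, a i) * ∏ i ∈ s, a i) := by ring
        _ = 0 := by rw [hz, mul_zero]
    rw [hS]
    simp only [pow_one, Nat.add_sub_cancel, Nat.choose_one_right, ihs, Nat.factorial_succ]
    push_cast
    ring

lemma mat_pow (u v : R) (n : ℕ) :
    (!![u, v; 0, 0] : Matrix (Fin 2) (Fin 2) R) ^ (n + 1) = !![u ^ (n + 1), u ^ n * v; 0, 0] := by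
  induction n with
  | zero => simp
  | succ n ih =>
    rw [pow_succ, ih, Matrix.mul_fin_two]
    congr 1 <;> ring

end aux

section coeffaux
variable {F : Type*} [Field F] {p : ℕ}

/-- The exponent vector of the full squarefree monomial. -/
noncomputable def mfull (p : ℕ) : Fin (p + 1) →₀ ℕ := ∑ i, Finsupp.single i 1

lemma mfull_apply (i : Fin (p + 1)) : mfull p i = 1 := by
  rw [mfull, Finsupp.finset_sum_apply]
  rw [Finset.sum_eq_single i (fun b _ hb => Finsupp.single_eq_of_ne hb.symm) (by simp)]
  simp

lemma coeff_mfull_span_zero (f : MvPolynomial (Fin (p + 1)) F)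
    (hf : f ∈ Ideal.span (Set.range fun i : Fin (p + 1) =>
      (X i : MvPolynomial (Fin (p + 1)) F) ^ 2)) :
    coeff (mfull p) f = 0 := by
  have key : ∀ f ∈ Ideal.span (Set.range fun i : Fin (p + 1) =>
      (X i : MvPolynomial (Fin (p + 1)) F) ^ 2),
      ∀ g : MvPolynomial (Fin (p + 1)) F, coeff (mfull p) (g * f) = 0 := by
    intro f hf
    refine Submodule.span_induction ?_ ?_ ?_ ?_ hf
    · rintro _ ⟨i, rfl⟩ g
      show coeff (mfull p) (g * X i ^ 2) = 0
      rw [X_pow_eq_monomial, coeff_mul_monomial']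
      rw [if_neg]
      intro hle
      have := hle i
      rw [mfull_apply, Finsupp.single_eq_same] at this
      omega
    · intro g; simp
    · intro x y _ _ hx hy g
      rw [mul_add, coeff_add, hx, hy, add_zero]
    · intro c x _ hx g
      rw [smul_eq_mul, ← mul_assoc]
      exact hx (g * c)
  simpa using key f hf 1

end coeffaux

/-- `C = F[c₁,…,c_{p+1}]/(cᵢ²)` (variables indexed by `Fin (p+1)`). -/
abbrev Cfin (F : Type*) [Field F] (p : ℕ) :=
  MvPolynomial (Fin (p + 1)) F ⧸
    Ideal.span (Set.range fun i : Fin (p + 1) => (X i : MvPolynomial (Fin (p + 1)) F) ^ 2)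

/-- The generator `c_{i+1}` of `C` (0-based index `i`). -/
noncomputable def cgen (F : Type*) [Field F] (p : ℕ) (i : Fin (p + 1)) : Cfin F p :=
  Ideal.Quotient.mk _ (X i)

section mainaux
variable {F : Type*} [Field F] (p : ℕ)

omit [Field F] in
lemma cgen_sq [Field F] (i : Fin (p + 1)) : cgen F p i ^ 2 = 0 := by
  rw [cgen, ← map_pow, Ideal.Quotient.eq_zero_iff_mem]
  exact Ideal.subset_span ⟨i, rfl⟩

lemma prod_cgen_fact_ne_zero (hp : p.Prime) [CharP F p] :
    ((p - 1).factorial : Cfin F p) * ∏ i : Fin (p + 1), cgen F p i ≠ 0 := by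
  intro h0
  have hprod : (∏ i : Fin (p + 1), cgen F p i)
      = Ideal.Quotient.mk _ (∏ i : Fin (p + 1), (X i : MvPolynomial (Fin (p + 1)) F)) := by
    rw [map_prod]; rfl
  have hcast : ((p - 1).factorial : Cfin F p)
      = Ideal.Quotient.mk _ (((p - 1).factorial : MvPolynomial (Fin (p + 1)) F)) := by
    simp
  rw [hcast, hprod, ← map_mul, Ideal.Quotient.eq_zero_iff_mem] at h0
  have hco := coeff_mfull_span_zero _ h0
  have hXprod : (∏ i : Fin (p + 1), (X i : MvPolynomial (Fin (p + 1)) F))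
      = monomial (mfull p) (1 : F) := by
    rw [mfull, monomial_sum_one]
    exact Finset.prod_congr rfl fun i _ => rfl
  rw [hXprod, show (((p - 1).factorial : ℕ) : MvPolynomial (Fin (p + 1)) F)
      = C (((p - 1).factorial : ℕ) : F) from (map_natCast C _).symm,
    coeff_C_mul, coeff_monomial, if_pos rfl, mul_one] at hco
  rw [CharP.cast_eq_zero_iff F p, hp.dvd_factorial] at hco
  have := hp.two_le
  omega

end mainaux

set_option maxHeartbeats 1000000 in
set_option synthInstance.maxHeartbeats 400000 in
theorem stmt11 {F : Type*} [Field F] (p : ℕ) (hp : p.Prime) [CharP F p] :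
    let x : Matrix (Fin 2) (Fin 2) (Cfin F p) :=
      !![∑ i ∈ Finset.univ.filter (fun i : Fin (p + 1) => (i : ℕ) < p - 1), cgen F p i,
         cgen F p ⟨p - 1, by omega⟩; 0, 0]
    let y : Matrix (Fin 2) (Fin 2) (Cfin F p) :=
      !![cgen F p ⟨p, by omega⟩, 0; 0, 0]
    (x ^ p * y - y * x ^ p
        = -(!![0, ((p - 1).factorial : Cfin F p) * ∏ i : Fin (p + 1), cgen F p i; 0, 0])) ∧
    x ^ p * y - y * x ^ p ≠ 0 := by
  have h2 := hp.two_le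
  obtain ⟨q, rfl⟩ : ∃ q, p = q + 1 := ⟨p - 1, by omega⟩
  intro x y
  set F1 := Finset.univ.filter (fun i : Fin (q + 1 + 1) => (i : ℕ) < q + 1 - 1) with hF1
  set u : Cfin F (q + 1) := ∑ i ∈ F1, cgen F (q + 1) i with hu
  set v : Cfin F (q + 1) := cgen F (q + 1) ⟨q + 1 - 1, by omega⟩ with hv
  set w : Cfin F (q + 1) := cgen F (q + 1) ⟨q + 1, by omega⟩ with hw
  have hxy : x = !![u, v; 0, 0] ∧ y = !![w, 0; 0, 0] := ⟨rfl, rfl⟩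
  -- card of the filter
  have hcard : F1.card = q := by
    have : F1 = Finset.Iio (⟨q, by omega⟩ : Fin (q + 1 + 1)) := by
      ext i
      simp [hF1, Fin.lt_def]
    rw [this, Fin.card_Iio]
  -- u ^ q
  have hupow : u ^ q = (q.factorial : Cfin F (q + 1)) * ∏ i ∈ F1, cgen F (q + 1) i := by
    have := sum_pow_card F1 (cgen F (q + 1)) (fun i _ => cgen_sq (q + 1) i)
    rwa [hcard] at this
  -- full product
  have hprodsplit : (∏ i : Fin (q + 1 + 1), cgen F (q + 1) i)
      = (∏ i ∈ F1, cgen F (q + 1) i) * (v * w) := by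
    rw [← Finset.prod_filter_mul_prod_filter_not Finset.univ
      (fun i : Fin (q + 1 + 1) => (i : ℕ) < q + 1 - 1)]
    congr 1
    have hset : Finset.univ.filter (fun i : Fin (q + 1 + 1) => ¬ (i : ℕ) < q + 1 - 1)
        = {(⟨q + 1 - 1, by omega⟩ : Fin (q + 1 + 1)), ⟨q + 1, by omega⟩} := by
      ext i
      simp only [Finset.mem_filter, Finset.mem_univ, true_and, Finset.mem_insert,
        Finset.mem_singleton, Fin.ext_iff]
      have := i.isLt
      omega
    rw [hset, Finset.prod_pair (by simp [Fin.ext_iff])]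
  have hK : u ^ q * v * w
      = ((q + 1 - 1).factorial : Cfin F (q + 1)) * ∏ i : Fin (q + 1 + 1), cgen F (q + 1) i := by
    rw [hupow, hprodsplit, Nat.add_sub_cancel, mul_assoc, mul_assoc]
  have hxp : x ^ (q + 1) = !![u ^ (q + 1), u ^ q * v; 0, 0] := by
    rw [hxy.1, mat_pow]
  have heq : x ^ (q + 1) * y - y * x ^ (q + 1)
      = -(!![0, ((q + 1 - 1).factorial : Cfin F (q + 1)) *
          ∏ i : Fin (q + 1 + 1), cgen F (q + 1) i; 0, 0]) := by
    rw [Nat.add_sub_cancel] at hK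
    rw [hxp, hxy.2, Matrix.mul_fin_two, Matrix.mul_fin_two]
    ext i j
    fin_cases i <;> fin_cases j <;>
      simp only [Fin.zero_eta, Fin.mk_one, Matrix.of_apply, Matrix.sub_apply, Matrix.neg_apply,
        Matrix.cons_val', Matrix.cons_val_zero, Matrix.cons_val_one, Matrix.head_cons,
        Matrix.empty_val', Matrix.cons_val_fin_one, Matrix.head_fin_const, Nat.add_sub_cancel,
        Nat.add_sub_cancel_left] <;>
      (first | ring1 | linear_combination hK | linear_combination -hK)
  refine ⟨heq, ?_⟩
  rw [heq]
  intro h0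
  have : ((q + 1 - 1).factorial : Cfin F (q + 1)) *
      ∏ i : Fin (q + 1 + 1), cgen F (q + 1) i = 0 := by
    have := congrFun (congrFun h0 0) 1
    simpa using this
  exact prod_cgen_fact_ne_zero (q + 1) hp this
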